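/- Let (P, L) be a linear system, let p ∈ P with deg(p) = Δ the maximum degree, and let Δ′ = max{deg(x) : x ∈ P \ {p}}. If |L| ≤ Δ + Δ′ + ν₂ − 3, where ν₂ is the 2-packing number, then τ ≤ ν₂ − 1. -/

import Mathlib

open Finset

variable {P : Type*} [Fintype P] [DecidableEq P]

/-- `T` is a transversal of the set system `L`: it meets every member of `L`. -/
def IsTransversal (L : Finset (Finset P)) (T : Finset P) : Prop :=
  ∀ ℓ ∈ L, (T ∩ ℓ).Nonempty

/-- The transversal number τ: minimum size of a transversal. -/
noncomputable def tau (L : Finset (Finset P)) : ℕ :=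
  sInf {n | ∃ T : Finset P, T.card = n ∧ IsTransversal L T}

/-- `M` is a matching of `L`: a pairwise disjoint subfamily. -/
def IsMatching (L M : Finset (Finset P)) : Prop :=
  M ⊆ L ∧ ∀ a ∈ M, ∀ b ∈ M, a ≠ b → a ∩ b = ∅

/-- The matching number ν: maximum size of a matching. -/
noncomputable def matchingNumber (L : Finset (Finset P)) : ℕ :=
  sSup {n | ∃ M : Finset (Finset P), IsMatching L M ∧ M.card = n}

/-- `R` is a 2-packing of `L`: no three distinct members share a common point. -/
def IsTwoPacking (L R : Finset (Finset P)) : Prop :=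
  R ⊆ L ∧ ∀ a ∈ R, ∀ b ∈ R, ∀ c ∈ R, a ≠ b → a ≠ c → b ≠ c → a ∩ b ∩ c = ∅

/-- The 2-packing number ν₂. -/
noncomputable def nu2 (L : Finset (Finset P)) : ℕ :=
  sSup {n | ∃ R : Finset (Finset P), IsTwoPacking L R ∧ R.card = n}

/-- A linear system: two distinct lines share at most one point. -/
def Linear (L : Finset (Finset P)) : Prop :=
  ∀ a ∈ L, ∀ b ∈ L, a ≠ b → (a ∩ b).card ≤ 1

/-- Intersecting: every two lines meet. -/
def Intersecting (L : Finset (Finset P)) : Prop :=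
  ∀ a ∈ L, ∀ b ∈ L, (a ∩ b).Nonempty

/-- `r`-uniform: every line has exactly `r` points. -/
def Uniform (L : Finset (Finset P)) (r : ℕ) : Prop :=
  ∀ ℓ ∈ L, ℓ.card = r

/-- `r`-partite: the points partition into `r` sides, each meeting every line exactly once. -/
def Partite (L : Finset (Finset P)) (r : ℕ) : Prop :=
  ∃ X : Fin r → Finset P, (∀ p : P, ∃! i, p ∈ X i) ∧
    ∀ ℓ ∈ L, ∀ i, (ℓ ∩ X i).card = 1

/-- The degree of a point: the number of lines through it. -/
def deg (L : Finset (Finset P)) (p : P) : ℕ :=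
  (L.filter (fun ℓ => p ∈ ℓ)).card

lemma tau_le_card' {L : Finset (Finset P)} {T : Finset P}
    (h : IsTransversal L T) : tau L ≤ T.card :=
  Nat.sInf_le ⟨T, rfl, h⟩

lemma packing_le_nu2' {L S : Finset (Finset P)} (h : IsTwoPacking L S) :
    S.card ≤ nu2 L := by
  apply le_csSup
  · refine ⟨L.card, ?_⟩
    rintro n ⟨M, hM, rfl⟩
    exact card_le_card hM.1
  · exact ⟨S, h, rfl⟩

lemma nu2_le_card' (L : Finset (Finset P)) : nu2 L ≤ L.card := by
  apply csSup_le
  · exact ⟨0, ∅, ⟨empty_subset L, by simp⟩, card_empty⟩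
  · rintro n ⟨M, hM, rfl⟩
    exact card_le_card hM.1

set_option maxHeartbeats 1000000 in
theorem stmt3 (L : Finset (Finset P)) (hlin : Linear L) (p : P) (Δ Δ' : ℕ)
    (hp : deg L p = Δ) (hmax : ∀ x : P, deg L x ≤ Δ)
    (hΔ' : IsGreatest {n | ∃ x : P, x ≠ p ∧ deg L x = n} Δ')
    (hcard : L.card ≤ Δ + Δ' + nu2 L - 3) :
    tau L ≤ nu2 L - 1 := by
  classical
  -- Case: there is an empty line, then no transversal exists, tau = 0.
  by_cases hempty : ∃ ℓ ∈ L, ℓ = ∅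
  · obtain ⟨ℓe, hℓe, rfl⟩ := hempty
    have h0 : {n | ∃ T : Finset P, T.card = n ∧ IsTransversal L T} = ∅ := by
      ext n
      simp only [Set.mem_setOf_eq, Set.mem_empty_iff_false, iff_false, not_exists]
      rintro T ⟨-, hT⟩
      simpa using hT ∅ hℓe
    rw [tau, h0, Nat.sInf_empty]
    exact Nat.zero_le _
  push_neg at hempty
  have hne : ∀ ℓ ∈ L, ℓ.Nonempty := fun ℓ h => hempty ℓ h
  -- Case: L empty, then tau = 0.
  by_cases hL0 : L = ∅
  · have : tau L ≤ (∅ : Finset P).card := by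
      apply tau_le_card'
      intro ℓ hℓ
      rw [hL0] at hℓ
      exact absurd hℓ (notMem_empty ℓ)
    simp only [card_empty] at this
    omega
  have hm1 : 1 ≤ L.card := card_pos.mpr (nonempty_iff_ne_empty.mpr hL0)
  have hnu2m : nu2 L ≤ L.card := nu2_le_card' L
  have harith : L.card + 3 ≤ Δ + Δ' + nu2 L := by omega
  have hub : ∀ x : P, x ≠ p → deg L x ≤ Δ' := fun x hx => hΔ'.2 ⟨x, hx, rfl⟩
  obtain ⟨q, hqp, hdq⟩ := hΔ'.1
  -- Δ' ≥ 1
  have hΔ'1 : 1 ≤ Δ' := by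
    by_contra h
    have hΔ'0 : Δ' = 0 := by omega
    have hΔ2 : 2 ≤ Δ := by omega
    have h2 : 2 ≤ (L.filter (fun ℓ => p ∈ ℓ)).card := by rw [deg] at hp; omega
    obtain ⟨ℓ₁, hℓ₁, ℓ₂, hℓ₂, hne12⟩ := one_lt_card.mp (by omega : 1 < (L.filter (fun ℓ => p ∈ ℓ)).card)
    have hsing : ∀ ℓ ∈ L, ℓ = {p} := by
      intro ℓ hℓ
      rw [Finset.eq_singleton_iff_nonempty_unique_mem]
      refine ⟨hne ℓ hℓ, ?_⟩
      intro x hx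
      by_contra hxp
      have h1 : deg L x ≤ 0 := hΔ'0 ▸ hub x hxp
      have h2 : 0 < deg L x := card_pos.mpr ⟨ℓ, mem_filter.mpr ⟨hℓ, hx⟩⟩
      omega
    exact hne12 ((hsing ℓ₁ (mem_filter.mp hℓ₁).1).trans (hsing ℓ₂ (mem_filter.mp hℓ₂).1).symm)
  -- the leftover lines
  set R : Finset (Finset P) := L.filter (fun ℓ => p ∉ ℓ ∧ q ∉ ℓ) with hRdef
  set k := R.card with hkdef
  -- representative function
  have hrepex : ∀ ℓ : Finset P, ∃ x : P, ℓ ∈ L → x ∈ ℓ := by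
    intro ℓ
    by_cases h : ℓ ∈ L
    · exact (hne ℓ h).imp fun x hx _ => hx
    · exact ⟨p, fun h' => absurd h' h⟩
  choose rep hrep using hrepex
  -- counting
  have hc1 : (L.filter (fun ℓ => p ∈ ℓ)).card + (L.filter (fun ℓ => ¬ p ∈ ℓ)).card = L.card :=
    card_filter_add_card_filter_not _
  have hc2 : ((L.filter (fun ℓ => ¬ p ∈ ℓ)).filter (fun ℓ => q ∈ ℓ)).card
      + ((L.filter (fun ℓ => ¬ p ∈ ℓ)).filter (fun ℓ => ¬ q ∈ ℓ)).card
      = (L.filter (fun ℓ => ¬ p ∈ ℓ)).card :=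
    card_filter_add_card_filter_not _
  have hc3 : ((L.filter (fun ℓ => q ∈ ℓ)).filter (fun ℓ => p ∈ ℓ)).card
      + ((L.filter (fun ℓ => q ∈ ℓ)).filter (fun ℓ => ¬ p ∈ ℓ)).card
      = (L.filter (fun ℓ => q ∈ ℓ)).card :=
    card_filter_add_card_filter_not _
  have hReq : (L.filter (fun ℓ => ¬ p ∈ ℓ)).filter (fun ℓ => ¬ q ∈ ℓ) = R := by
    rw [filter_filter]
  have hcomm : (L.filter (fun ℓ => q ∈ ℓ)).filter (fun ℓ => ¬ p ∈ ℓ)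
      = (L.filter (fun ℓ => ¬ p ∈ ℓ)).filter (fun ℓ => q ∈ ℓ) := by
    rw [filter_filter, filter_filter]
    apply filter_congr
    intro ℓ _
    simp [and_comm]
  have hdqc : (L.filter (fun ℓ => q ∈ ℓ)).card = Δ' := hdq
  have hdpc : (L.filter (fun ℓ => p ∈ ℓ)).card = Δ := hp
  set e := ((L.filter (fun ℓ => q ∈ ℓ)).filter (fun ℓ => p ∈ ℓ)).card with hedef
  -- master counting equation: Δ + (Δ' - e) + k = L.card
  have hmaster : Δ + (Δ' - e) + k = L.card ∧ e ≤ Δ' := by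
    constructor
    · rw [← hdpc, ← hc1, ← hc2, hReq, hkdef, hcomm] at *
      omega
    · rw [hedef, ← hdqc]
      omega
  -- trivial transversal {p, q} ∪ reps of R
  have htriv : k + 3 ≤ nu2 L → tau L ≤ nu2 L - 1 := by
    intro hk
    have hT : IsTransversal L (insert p (insert q (R.image rep))) := by
      intro ℓ hℓ
      by_cases hpℓ : p ∈ ℓ
      · exact ⟨p, mem_inter.mpr ⟨mem_insert_self _ _, hpℓ⟩⟩
      by_cases hqℓ : q ∈ ℓ
      · exact ⟨q, mem_inter.mpr ⟨mem_insert_of_mem (mem_insert_self _ _), hqℓ⟩⟩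
      have hℓR : ℓ ∈ R := mem_filter.mpr ⟨hℓ, hpℓ, hqℓ⟩
      exact ⟨rep ℓ, mem_inter.mpr ⟨mem_insert_of_mem (mem_insert_of_mem
        (mem_image_of_mem rep hℓR)), hrep ℓ hℓ⟩⟩
    have hcardT : (insert p (insert q (R.image rep))).card ≤ 2 + k := by
      calc (insert p (insert q (R.image rep))).card
          ≤ (insert q (R.image rep)).card + 1 := card_insert_le _ _
        _ ≤ (R.image rep).card + 1 + 1 := by
            have := card_insert_le q (R.image rep); omega
        _ ≤ k + 2 := by have := card_image_le (f := rep) (s := R); omega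
        _ = 2 + k := by omega
    have := tau_le_card' hT
    omega
  -- Case: no line through both p and q
  by_cases hexl0 : ∃ ℓ ∈ L, p ∈ ℓ ∧ q ∈ ℓ
  swap
  · -- e = 0
    push_neg at hexl0
    have he0 : e = 0 := by
      rw [hedef, card_eq_zero]
      rw [eq_empty_iff_forall_notMem]
      intro ℓ hℓ
      simp only [mem_filter] at hℓ
      exact hexl0 ℓ hℓ.1.1 hℓ.2 hℓ.1.2
    exact htriv (by omega)
  obtain ⟨ℓ₀, hℓ₀L, hpℓ₀, hqℓ₀⟩ := hexl0
  have huniq : ∀ ℓ ∈ L, p ∈ ℓ → q ∈ ℓ → ℓ = ℓ₀ := by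
    intro ℓ hℓ hpℓ hqℓ
    by_contra hne'
    have hle := hlin ℓ hℓ ℓ₀ hℓ₀L hne'
    have h2 : ({p, q} : Finset P) ⊆ ℓ ∩ ℓ₀ := by
      intro x hx
      simp only [mem_insert, mem_singleton] at hx
      rcases hx with rfl | rfl
      · exact mem_inter.mpr ⟨hpℓ, hpℓ₀⟩
      · exact mem_inter.mpr ⟨hqℓ, hqℓ₀⟩
    have := card_le_card h2
    rw [card_insert_of_notMem (by simpa using hqp.symm), card_singleton] at this
    omega
  have he1 : e = 1 := by
    rw [hedef]
    rw [card_eq_one]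
    refine ⟨ℓ₀, ?_⟩
    ext ℓ
    simp only [mem_filter, mem_singleton]
    constructor
    · rintro ⟨⟨hℓ, hqℓ⟩, hpℓ⟩
      exact huniq ℓ hℓ hpℓ hqℓ
    · rintro rfl
      exact ⟨⟨hℓ₀L, hqℓ₀⟩, hpℓ₀⟩
  have hk2 : k + 2 ≤ nu2 L := by omega
  -- Case Δ' = 1 : cover with p and reps of R
  by_cases hΔ'eq1 : Δ' = 1
  · have hT : IsTransversal L (insert p (R.image rep)) := by
      intro ℓ hℓ
      by_cases hpℓ : p ∈ ℓ
      · exact ⟨p, mem_inter.mpr ⟨mem_insert_self _ _, hpℓ⟩⟩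
      by_cases hqℓ : q ∈ ℓ
      · -- ℓ passes through q so ℓ = ℓ₀, but p ∉ ℓ while p ∈ ℓ₀: contradiction
        exfalso
        have hcard1 : (L.filter (fun ℓ => q ∈ ℓ)).card ≤ 1 := by omega
        have := card_le_one.mp hcard1 ℓ (mem_filter.mpr ⟨hℓ, hqℓ⟩) ℓ₀
          (mem_filter.mpr ⟨hℓ₀L, hqℓ₀⟩)
        exact hpℓ (this ▸ hpℓ₀)
      have hℓR : ℓ ∈ R := mem_filter.mpr ⟨hℓ, hpℓ, hqℓ⟩
      exact ⟨rep ℓ, mem_inter.mpr ⟨mem_insert_of_mem (mem_image_of_mem rep hℓR),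
        hrep ℓ hℓ⟩⟩
    have hcardT : (insert p (R.image rep)).card ≤ 1 + k := by
      have h1 := card_insert_le p (R.image rep)
      have h2 := card_image_le (f := rep) (s := R)
      omega
    have := tau_le_card' hT
    omega
  have hΔ'2 : 2 ≤ Δ' := by omega
  -- there is a line b through q distinct from ℓ₀
  have hbex : ∃ b, b ∈ L ∧ q ∈ b ∧ b ≠ ℓ₀ := by
    have h2 : 1 < (L.filter (fun ℓ => q ∈ ℓ)).card := by omega
    obtain ⟨ℓ₁, hℓ₁, ℓ₂, hℓ₂, hne12⟩ := one_lt_card.mp h2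
    by_cases h : ℓ₁ = ℓ₀
    · exact ⟨ℓ₂, (mem_filter.mp hℓ₂).1, (mem_filter.mp hℓ₂).2, by rw [← h]; exact hne12.symm⟩
    · exact ⟨ℓ₁, (mem_filter.mp hℓ₁).1, (mem_filter.mp hℓ₁).2, h⟩
  obtain ⟨b, hbL, hqb, hbne⟩ := hbex
  have hpb : p ∉ b := fun h => hbne (huniq b hbL h hqb)
  -- the lines through p other than ℓ₀
  set A : Finset (Finset P) := (L.filter (fun ℓ => p ∈ ℓ)).erase ℓ₀ with hAdef
  have hAcard : A.card = Δ - 1 := by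
    rw [hAdef, card_erase_of_mem (mem_filter.mpr ⟨hℓ₀L, hpℓ₀⟩), hdpc]
  have hAmem : ∀ a ∈ A, a ∈ L ∧ p ∈ a ∧ a ≠ ℓ₀ := by
    intro a ha
    rw [hAdef, mem_erase, mem_filter] at ha
    exact ⟨ha.2.1, ha.2.2, ha.1⟩
  by_cases hbad : ∀ a ∈ A, ∃ x, x ∈ a ∧ x ∈ b ∧ ∃ r ∈ R, x ∈ r
  · -- every line through p (other than ℓ₀) meets b at a point of some leftover line
    have hbad' : ∀ a : Finset P, ∃ x : P, ∃ r : Finset P,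
        a ∈ A → (x ∈ a ∧ x ∈ b ∧ r ∈ R ∧ x ∈ r) := by
      intro a
      by_cases h : a ∈ A
      · obtain ⟨x, hx1, hx2, r, hr, hxr⟩ := hbad a h
        exact ⟨x, r, fun _ => ⟨hx1, hx2, hr, hxr⟩⟩
      · exact ⟨p, ∅, fun h' => absurd h' h⟩
    choose xf rf hspec using hbad'
    -- rf is injective on A
    have hrfinj : Set.InjOn rf A := by
      intro a₁ ha₁ a₂ ha₂ heq
      by_contra hne'
      obtain ⟨ha₁L, hpa₁, -⟩ := hAmem a₁ ha₁
      obtain ⟨ha₂L, hpa₂, -⟩ := hAmem a₂ ha₂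
      obtain ⟨hx₁a, hx₁b, hr₁R, hx₁r⟩ := hspec a₁ ha₁
      obtain ⟨hx₂a, hx₂b, hr₂R, hx₂r⟩ := hspec a₂ ha₂
      have hrL : rf a₁ ∈ L := (mem_filter.mp hr₁R).1
      have hqr : q ∉ rf a₁ := (mem_filter.mp hr₁R).2.2
      have hbr : b ≠ rf a₁ := fun h => hqr (h ▸ hqb)
      -- xf a₁ = xf a₂ since both lie on b ∩ rf a₁
      have hxeq : xf a₁ = xf a₂ := by
        have hle := hlin b hbL (rf a₁) hrL hbr
        exact card_le_one.mp hle _ (mem_inter.mpr ⟨hx₁b, hx₁r⟩) _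
          (mem_inter.mpr ⟨hx₂b, heq ▸ hx₂r⟩)
      -- then xf a₁ ∈ a₁ ∩ a₂ so xf a₁ = p, contradiction with xf a₁ ∈ b
      have hle := hlin a₁ ha₁L a₂ ha₂L hne'
      have hxp : xf a₁ = p := card_le_one.mp hle _
        (mem_inter.mpr ⟨hx₁a, hxeq ▸ hx₂a⟩) _ (mem_inter.mpr ⟨hpa₁, hpa₂⟩)
      exact hpb (hxp ▸ hx₁b)
    have himsub : A.image rf ⊆ R := by
      intro r hr
      obtain ⟨a, ha, rfl⟩ := mem_image.mp hr
      exact (hspec a ha).2.2.1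
    have himcard : (A.image rf).card = Δ - 1 := by
      rw [card_image_of_injOn hrfinj, hAcard]
    have hΔk : Δ - 1 ≤ k := himcard ▸ card_le_card himsub
    set T := insert q ((A.image xf) ∪ ((R \ A.image rf).image rep)) with hTdef
    have hT : IsTransversal L T := by
      intro ℓ hℓ
      by_cases hqℓ : q ∈ ℓ
      · exact ⟨q, mem_inter.mpr ⟨mem_insert_self _ _, hqℓ⟩⟩
      by_cases hpℓ : p ∈ ℓ
      · have hℓA : ℓ ∈ A := by
          rw [hAdef, mem_erase, mem_filter]
          exact ⟨fun h => hqℓ (h ▸ hqℓ₀), hℓ, hpℓ⟩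
        exact ⟨xf ℓ, mem_inter.mpr ⟨mem_insert_of_mem (mem_union_left _
          (mem_image_of_mem xf hℓA)), (hspec ℓ hℓA).1⟩⟩
      have hℓR : ℓ ∈ R := mem_filter.mpr ⟨hℓ, hpℓ, hqℓ⟩
      by_cases him : ℓ ∈ A.image rf
      · obtain ⟨a, ha, rfl⟩ := mem_image.mp him
        exact ⟨xf a, mem_inter.mpr ⟨mem_insert_of_mem (mem_union_left _
          (mem_image_of_mem xf ha)), (hspec a ha).2.2.2⟩⟩
      · exact ⟨rep ℓ, mem_inter.mpr ⟨mem_insert_of_mem (mem_union_right _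
          (mem_image_of_mem rep (mem_sdiff.mpr ⟨hℓR, him⟩))), hrep ℓ hℓ⟩⟩
    have hcardT : T.card ≤ 1 + k := by
      have h1 := card_insert_le q ((A.image xf) ∪ ((R \ A.image rf).image rep))
      have h2 := card_union_le (A.image xf) ((R \ A.image rf).image rep)
      have h3 := card_image_le (f := xf) (s := A)
      have h4 := card_image_le (f := rep) (s := R \ A.image rf)
      have h5 : (R \ A.image rf).card = k - (Δ - 1) := by
        rw [card_sdiff_of_subset himsub, himcard]
      rw [hTdef]
      omega
    have := tau_le_card' hT
    omega
  -- a "good" line a through p: a ∩ b misses every leftover line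
  push_neg at hbad
  obtain ⟨a, haA, hgood⟩ := hbad
  obtain ⟨haL, hpa, hane⟩ := hAmem a haA
  have hqa : q ∉ a := fun h => hane (huniq a haL hpa h)
  by_cases hk3 : k + 3 ≤ nu2 L
  · exact htriv hk3
  -- so nu2 L ≤ k + 2; if two leftover lines meet we can save one point
  by_cases hRR : ∃ r ∈ R, ∃ r' ∈ R, r ≠ r' ∧ (r ∩ r').Nonempty
  · obtain ⟨r, hrR, r', hr'R, hrr', x, hx⟩ := hRR
    have hxr : x ∈ r := (mem_inter.mp hx).1
    have hxr' : x ∈ r' := (mem_inter.mp hx).2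
    have hk2' : 2 ≤ k := one_lt_card.mpr ⟨r, hrR, r', hr'R, hrr'⟩
    set T := insert p (insert q (insert x (((R.erase r).erase r').image rep))) with hTdef
    have hT : IsTransversal L T := by
      intro ℓ hℓ
      by_cases hpℓ : p ∈ ℓ
      · exact ⟨p, mem_inter.mpr ⟨mem_insert_self _ _, hpℓ⟩⟩
      by_cases hqℓ : q ∈ ℓ
      · exact ⟨q, mem_inter.mpr ⟨mem_insert_of_mem (mem_insert_self _ _), hqℓ⟩⟩
      have hℓR : ℓ ∈ R := mem_filter.mpr ⟨hℓ, hpℓ, hqℓ⟩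
      by_cases h1 : ℓ = r
      · exact ⟨x, mem_inter.mpr ⟨mem_insert_of_mem (mem_insert_of_mem
          (mem_insert_self _ _)), h1 ▸ hxr⟩⟩
      by_cases h2 : ℓ = r'
      · exact ⟨x, mem_inter.mpr ⟨mem_insert_of_mem (mem_insert_of_mem
          (mem_insert_self _ _)), h2 ▸ hxr'⟩⟩
      have : ℓ ∈ (R.erase r).erase r' := mem_erase.mpr ⟨h2, mem_erase.mpr ⟨h1, hℓR⟩⟩
      exact ⟨rep ℓ, mem_inter.mpr ⟨mem_insert_of_mem (mem_insert_of_mem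
        (mem_insert_of_mem (mem_image_of_mem rep this))), hrep ℓ hℓ⟩⟩
    have hcardT : T.card ≤ 3 + (k - 2) := by
      have h1 := card_insert_le p (insert q (insert x (((R.erase r).erase r').image rep)))
      have h2 := card_insert_le q (insert x (((R.erase r).erase r').image rep))
      have h3 := card_insert_le x (((R.erase r).erase r').image rep)
      have h4 := card_image_le (f := rep) (s := (R.erase r).erase r')
      have h5 : ((R.erase r).erase r').card = k - 2 := by
        rw [card_erase_of_mem (mem_erase.mpr ⟨hrr'.symm, hr'R⟩), card_erase_of_mem hrR]
        omega
      rw [hTdef]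
      omega
    have := tau_le_card' hT
    omega
  -- otherwise the leftover lines are pairwise disjoint: build a 2-packing of size k+3
  exfalso
  push_neg at hRR
  have hRdisj : ∀ r ∈ R, ∀ r' ∈ R, r ≠ r' → ∀ x : P, x ∈ r → x ∈ r' → False := by
    intro r hr r' hr' hne' x hx hx'
    exact (not_nonempty_iff_eq_empty.mpr (hRR r hr r' hr' hne')) ⟨x, mem_inter.mpr ⟨hx, hx'⟩⟩
  have hpR : ∀ r ∈ R, p ∉ r := fun r hr => (mem_filter.mp hr).2.1
  have hqR : ∀ r ∈ R, q ∉ r := fun r hr => (mem_filter.mp hr).2.2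
  have haneb : a ≠ b := fun h => hpb (h ▸ hpa)
  have hl0a : ∀ x : P, x ∈ ℓ₀ → x ∈ a → x = p := by
    intro x h1 h2
    have hle := hlin ℓ₀ hℓ₀L a haL (Ne.symm hane)
    exact card_le_one.mp hle _ (mem_inter.mpr ⟨h1, h2⟩) _ (mem_inter.mpr ⟨hpℓ₀, hpa⟩)
  have hl0b : ∀ x : P, x ∈ ℓ₀ → x ∈ b → x = q := by
    intro x h1 h2
    have hle := hlin ℓ₀ hℓ₀L b hbL (Ne.symm hbne)
    exact card_le_one.mp hle _ (mem_inter.mpr ⟨h1, h2⟩) _ (mem_inter.mpr ⟨hqℓ₀, hqb⟩)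
  have h1 : ∀ x : P, x ∈ ℓ₀ → x ∈ a → x ∈ b → False :=
    fun x hx1 hx2 hx3 => hpb ((hl0a x hx1 hx2) ▸ hx3)
  have h2 : ∀ r ∈ R, ∀ x : P, x ∈ ℓ₀ → x ∈ a → x ∈ r → False :=
    fun r hr x hx1 hx2 hx3 => (hpR r hr) ((hl0a x hx1 hx2) ▸ hx3)
  have h3 : ∀ r ∈ R, ∀ x : P, x ∈ ℓ₀ → x ∈ b → x ∈ r → False :=
    fun r hr x hx1 hx2 hx3 => (hqR r hr) ((hl0b x hx1 hx2) ▸ hx3)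
  have h4 : ∀ r ∈ R, ∀ x : P, x ∈ a → x ∈ b → x ∈ r → False :=
    fun r hr x hx1 hx2 hx3 => hgood x hx1 hx2 r hr hx3
  set S : Finset (Finset P) := insert ℓ₀ (insert a (insert b R)) with hSdef
  have hbR : b ∉ R := fun h => hqR b h hqb
  have haR : a ∉ R := fun h => hpR a h hpa
  have hl0R : ℓ₀ ∉ R := fun h => hpR ℓ₀ h hpℓ₀
  have hScard : S.card = k + 3 := by
    have e1 : ℓ₀ ∉ insert a (insert b R) := by
      simp only [mem_insert]
      push_neg
      exact ⟨fun h => hane h.symm, fun h => hbne h.symm, hl0R⟩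
    have e2 : a ∉ insert b R := by
      simp only [mem_insert]
      push_neg
      exact ⟨haneb, haR⟩
    rw [hSdef, card_insert_of_notMem e1, card_insert_of_notMem e2,
      card_insert_of_notMem hbR]
  have hpack : IsTwoPacking L S := by
    constructor
    · intro u hu
      rw [hSdef] at hu
      simp only [mem_insert] at hu
      rcases hu with rfl | rfl | rfl | hu
      · exact hℓ₀L
      · exact haL
      · exact hbL
      · exact (mem_filter.mp hu).1
    · intro u hu v hv w hw huv huw hvw
      rw [eq_empty_iff_forall_notMem]
      intro x hx
      rw [mem_inter, mem_inter] at hx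
      obtain ⟨⟨hxu, hxv⟩, hxw⟩ := hx
      rw [hSdef] at hu hv hw
      simp only [mem_insert] at hu hv hw
      rcases hu with rfl | rfl | rfl | hu <;>
        rcases hv with rfl | rfl | rfl | hv <;>
          rcases hw with rfl | rfl | rfl | hw <;>
            first
              | exact huv rfl
              | exact huw rfl
              | exact hvw rfl
              | exact hRdisj _ hu _ hv huv x hxu hxv
              | exact hRdisj _ hu _ hw huw x hxu hxw
              | exact hRdisj _ hv _ hw hvw x hxv hxw
              | exact h1 x hxu hxv hxw
              | exact h1 x hxu hxw hxv
              | exact h1 x hxv hxu hxw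
              | exact h1 x hxv hxw hxu
              | exact h1 x hxw hxu hxv
              | exact h1 x hxw hxv hxu
              | exact h2 _ hw x hxu hxv hxw
              | exact h2 _ hw x hxv hxu hxw
              | exact h2 _ hv x hxu hxw hxv
              | exact h2 _ hv x hxw hxu hxv
              | exact h2 _ hu x hxv hxw hxu
              | exact h2 _ hu x hxw hxv hxu
              | exact h3 _ hw x hxu hxv hxw
              | exact h3 _ hw x hxv hxu hxw
              | exact h3 _ hv x hxu hxw hxv
              | exact h3 _ hv x hxw hxu hxv
              | exact h3 _ hu x hxv hxw hxu
              | exact h3 _ hu x hxw hxv hxu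
              | exact h4 _ hw x hxu hxv hxw
              | exact h4 _ hw x hxv hxu hxw
              | exact h4 _ hv x hxu hxw hxv
              | exact h4 _ hv x hxw hxu hxv
              | exact h4 _ hu x hxv hxw hxu
              | exact h4 _ hu x hxw hxv hxu
  have := packing_le_nu2' hpack
  omega
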